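/- Let p ∈ ℝ[t] be squarefree with p(t₀) = 0, and let a11, a12, b11, b12 ∈ ℝ[t] with a11(t₀) = 0, b11(t₀) = 0 and b12(t₀) ≠ 0. Then, as t tends to t₀ within the set { t ∈ ℝ : t ≠ t₀ and p(t) > 0 }, the function t ↦ (a11(t) + √(p(t))·a12(t)) / (b11(t) + √(p(t))·b12(t)) tends to the finite limit a12(t₀)/b12(t₀). (In the paper's terms: at a base point of the map lying at a ramification point of the Weierstrass curve, the component x(t, √(p(t))) extends continuously with value a12(t₀)/b12(t₀) whenever b12(t₀) ≠ 0.) -/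

import Mathlib

open Polynomial Filter

lemma aux_root_div_sqrt (p q : Polynomial ℝ) (hp : Squarefree p) (t₀ : ℝ)
    (hpt₀ : p.eval t₀ = 0) (hq : q.eval t₀ = 0) :
    Tendsto (fun t : ℝ => q.eval t / Real.sqrt (p.eval t))
      (nhdsWithin t₀ {t : ℝ | t ≠ t₀ ∧ 0 < p.eval t}) (nhds 0) := by
  obtain ⟨q₁, hq₁⟩ : (X - C t₀) ∣ q := dvd_iff_isRoot.mpr hq
  obtain ⟨p₁, hp₁⟩ : (X - C t₀) ∣ p := dvd_iff_isRoot.mpr hpt₀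
  have hp₁t₀ : p₁.eval t₀ ≠ 0 := by
    intro h
    obtain ⟨p₂, hp₂⟩ : (X - C t₀) ∣ p₁ := dvd_iff_isRoot.mpr h
    have : IsUnit (X - C t₀) := hp (X - C t₀) ⟨p₂, by rw [hp₁, hp₂]; ring⟩
    exact (Polynomial.not_isUnit_X_sub_C t₀) this
  set g : ℝ → ℝ := fun t => Real.sqrt ((t - t₀) / p₁.eval t) * |q₁.eval t|
  have hg : Tendsto g (nhdsWithin t₀ {t : ℝ | t ≠ t₀ ∧ 0 < p.eval t}) (nhds 0) := by
    have hc : ContinuousAt g t₀ := by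
      apply ContinuousAt.mul
      · exact Real.continuous_sqrt.continuousAt.comp
          (ContinuousAt.div (by fun_prop) p₁.continuous.continuousAt hp₁t₀)
      · exact (continuous_abs.comp q₁.continuous).continuousAt
    have hval : g t₀ = 0 := by simp [g]
    simpa [hval] using hc.continuousWithinAt.tendsto
  apply squeeze_zero_norm' _ hg
  filter_upwards [self_mem_nhdsWithin] with t ht
  obtain ⟨htne, htp⟩ := ht
  have hsp : 0 < Real.sqrt (p.eval t) := Real.sqrt_pos.mpr htp
  have hpev : p.eval t = (t - t₀) * p₁.eval t := by rw [hp₁]; simp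
  have hqev : q.eval t = (t - t₀) * q₁.eval t := by rw [hq₁]; simp
  have key : |t - t₀| / Real.sqrt (p.eval t) = Real.sqrt ((t - t₀) / p₁.eval t) := by
    rw [← Real.sqrt_sq_eq_abs, ← Real.sqrt_div' _ htp.le, hpev]
    congr 1
    have ht0 : t - t₀ ≠ 0 := sub_ne_zero.mpr htne
    have hp₁t : p₁.eval t ≠ 0 := by
      intro h; rw [hpev, h, mul_zero] at htp; exact lt_irrefl 0 htp
    field_simp
  have : ‖q.eval t / Real.sqrt (p.eval t)‖ = |t - t₀| / Real.sqrt (p.eval t) * |q₁.eval t| := by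
    rw [hqev, Real.norm_eq_abs, abs_div, abs_mul, abs_of_pos hsp]
    ring
  rw [this, key]

/-- At a base point `(t₀,0)` of the map lying at a ramification point of the
Weierstrass curve (i.e. `p(t₀) = 0`, `a11(t₀) = b11(t₀) = 0`) with `b12(t₀) ≠ 0`,
the component `x(t,√(p(t)))` extends continuously with finite limit
`a12(t₀)/b12(t₀)` as `t → t₀` within `{t ≠ t₀ : p(t) > 0}`. -/
theorem base_point_finite_limit (p a11 a12 b11 b12 : Polynomial ℝ)
    (hp : Squarefree p) (t₀ : ℝ) (hpt₀ : p.eval t₀ = 0)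
    (ha11 : a11.eval t₀ = 0) (hb11 : b11.eval t₀ = 0) (hb12 : b12.eval t₀ ≠ 0) :
    Tendsto (fun t : ℝ =>
        (a11.eval t + Real.sqrt (p.eval t) * a12.eval t) /
          (b11.eval t + Real.sqrt (p.eval t) * b12.eval t))
      (nhdsWithin t₀ {t : ℝ | t ≠ t₀ ∧ 0 < p.eval t})
      (nhds (a12.eval t₀ / b12.eval t₀)) := by
  have hA := aux_root_div_sqrt p a11 hp t₀ hpt₀ ha11
  have hB := aux_root_div_sqrt p b11 hp t₀ hpt₀ hb11
  have ha12 : Tendsto (fun t => a12.eval t)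
      (nhdsWithin t₀ {t : ℝ | t ≠ t₀ ∧ 0 < p.eval t}) (nhds (a12.eval t₀)) :=
    a12.continuous.continuousAt.continuousWithinAt.tendsto
  have hb12' : Tendsto (fun t => b12.eval t)
      (nhdsWithin t₀ {t : ℝ | t ≠ t₀ ∧ 0 < p.eval t}) (nhds (b12.eval t₀)) :=
    b12.continuous.continuousAt.continuousWithinAt.tendsto
  have hnum := hA.add ha12
  have hden := hB.add hb12'
  rw [zero_add] at hnum hden
  have hdiv := hnum.div hden hb12
  apply hdiv.congr'
  filter_upwards [self_mem_nhdsWithin] with t ht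
  obtain ⟨htne, htp⟩ := ht
  have hsp : Real.sqrt (p.eval t) ≠ 0 := (Real.sqrt_pos.mpr htp).ne'
  simp only [Pi.div_apply]
  field_simp
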